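/- The family {f_i}_{i=1}^n is L-average smooth, i.e. for all x, y ∈ ℝ^d, (1/n)·∑_{i=1}^n ‖∇f_i(x) − ∇f_i(y)‖₂² ≤ L²·‖x−y‖₂². -/

import Mathlib

open Finset
open scoped RealInnerProductSpace

/-- The `p × p` tridiagonal matrix with diagonal entries `2` except the last one, which is `ξ`,
and `-1` on the sub- and super-diagonal. -/
noncomputable def Tmat (p : ℕ) (ξ : ℝ) : Matrix (Fin p) (Fin p) ℝ :=
  fun j k =>
    if j = k then (if (j : ℕ) = p - 1 then ξ else 2)
    else if (j : ℕ) + 1 = (k : ℕ) ∨ (k : ℕ) + 1 = (j : ℕ) then -1 else 0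

/-- The `d × d` matrix (`d = np`, coordinates indexed by `Fin n × Fin p`) which is zero outside
the `i`-th diagonal `p × p` block, and whose `i`-th diagonal block is `Tmat p ξ`. -/
noncomputable def Amat (n p : ℕ) (ξ : ℝ) (i : Fin n) :
    Matrix (Fin n × Fin p) (Fin n × Fin p) ℝ :=
  fun a b => if a.1 = i ∧ b.1 = i then Tmat p ξ a.2 b.2 else 0

/-- The `d × d` diagonal matrix which is the orthogonal projection onto the coordinates
of the `i`-th block of `p` coordinates. -/
noncomputable def Bmat (n p : ℕ) (i : Fin n) :
    Matrix (Fin n × Fin p) (Fin n × Fin p) ℝ :=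
  fun a b => if a = b ∧ a.1 = i then 1 else 0

/-- The component function
`f_i(x) = ((√n L − nμ)/4) ((1/2)⟨x, A_i x⟩ − ⟨e_{(i−1)p+1}, x⟩) + (nμ/2)⟨x, B_i x⟩`. -/
noncomputable def fComp2 (n p : ℕ) [NeZero p] (L μ ξ : ℝ) (i : Fin n)
    (x : EuclideanSpace ℝ (Fin n × Fin p)) : ℝ :=
  ((Real.sqrt n * L - n * μ) / 4) *
      ((1 / 2) * (∑ a : Fin n × Fin p, ∑ b : Fin n × Fin p, x a * Amat n p ξ i a b * x b)
        - x (i, 0)) +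
    (n * μ / 2) * (∑ a : Fin n × Fin p, ∑ b : Fin n × Fin p, x a * Bmat n p i a b * x b)

/-! ### Auxiliary lemmas -/

lemma hasFDerivAt_coord {ι : Type*} [Fintype ι] [DecidableEq ι] (a : ι)
    (x : EuclideanSpace ℝ ι) :
    HasFDerivAt (fun x : EuclideanSpace ℝ ι => x a)
      (EuclideanSpace.proj a : EuclideanSpace ℝ ι →L[ℝ] ℝ) x := by
  have := (EuclideanSpace.proj (𝕜 := ℝ) a).hasFDerivAt (x := x)
  convert this using 2
  rfl

lemma hasFDerivAt_quad {ι : Type*} [Fintype ι] [DecidableEq ι] (M : Matrix ι ι ℝ)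
    (x : EuclideanSpace ℝ ι) :
    HasFDerivAt (fun x : EuclideanSpace ℝ ι => ∑ a, ∑ b, x a * M a b * x b)
      (∑ a : ι, ∑ b : ι, ((x a * M a b) • EuclideanSpace.proj b
        + (x b * M a b) • (EuclideanSpace.proj a : EuclideanSpace ℝ ι →L[ℝ] ℝ))) x := by
  apply HasFDerivAt.fun_sum
  intro a _
  apply HasFDerivAt.fun_sum
  intro b _
  have h1 : HasFDerivAt (fun x : EuclideanSpace ℝ ι => x a * M a b)
      (M a b • (EuclideanSpace.proj a : EuclideanSpace ℝ ι →L[ℝ] ℝ)) x :=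
    (hasFDerivAt_coord a x).mul_const _
  have h2 := h1.mul (hasFDerivAt_coord b x)
  refine h2.congr_fderiv ?_
  ext w
  simp [mul_comm, mul_assoc, mul_left_comm]

lemma key_sum {ι : Type*} [Fintype ι] (M : Matrix ι ι ℝ) (hM : ∀ a b, M a b = M b a)
    (x w : ι → ℝ) :
    ∑ a, ∑ b, ((x a * M a b) * w b + (x b * M a b) * w a)
      = 2 * ∑ a, (∑ b, M a b * x b) * w a := by
  have h1 : ∑ a, ∑ b, (x a * M a b) * w b = ∑ a, (∑ b, M a b * x b) * w a := by
    rw [Finset.sum_comm]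
    refine Finset.sum_congr rfl fun b _ => ?_
    rw [Finset.sum_mul]
    refine Finset.sum_congr rfl fun a _ => ?_
    rw [hM b a]; ring
  have h2 : ∑ a, ∑ b, (x b * M a b) * w a = ∑ a, (∑ b, M a b * x b) * w a := by
    refine Finset.sum_congr rfl fun a _ => ?_
    rw [Finset.sum_mul]
    refine Finset.sum_congr rfl fun b _ => ?_
    ring
  simp only [Finset.sum_add_distrib, h1, h2]
  ring

/-- The gradient of `fComp2`. -/
noncomputable def gradVec (n p : ℕ) [NeZero p] (L μ ξ : ℝ) (i : Fin n)
    (x : EuclideanSpace ℝ (Fin n × Fin p)) : EuclideanSpace ℝ (Fin n × Fin p) :=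
  WithLp.toLp 2 (fun a => ((Real.sqrt n * L - n * μ) / 4) *
      ((∑ b, Amat n p ξ i a b * x b) - (if a = (i, 0) then 1 else 0))
    + (n * μ) * ∑ b, Bmat n p i a b * x b)

lemma Tmat_symm (p : ℕ) (ξ : ℝ) (j k : Fin p) : Tmat p ξ j k = Tmat p ξ k j := by
  unfold Tmat
  rcases eq_or_ne j k with h | h
  · simp [h]
  · simp [h, h.symm, or_comm]

lemma Amat_symm (n p : ℕ) (ξ : ℝ) (i : Fin n) (a b : Fin n × Fin p) :
    Amat n p ξ i a b = Amat n p ξ i b a := by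
  unfold Amat
  rcases eq_or_ne a.1 i with h | h <;> rcases eq_or_ne b.1 i with h' | h' <;>
    simp [h, h', Tmat_symm]

lemma Bmat_symm (n p : ℕ) (i : Fin n) (a b : Fin n × Fin p) :
    Bmat n p i a b = Bmat n p i b a := by
  unfold Bmat
  rcases eq_or_ne a b with h | h
  · simp [h]
  · simp [h, h.symm]

lemma hasGradientAt_fComp2 (n p : ℕ) [NeZero p] (L μ ξ : ℝ) (i : Fin n)
    (x : EuclideanSpace ℝ (Fin n × Fin p)) :
    HasGradientAt (fComp2 n p L μ ξ i) (gradVec n p L μ ξ i x) x := by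
  rw [hasGradientAt_iff_hasFDerivAt]
  set c1 := (Real.sqrt n * L - n * μ) / 4
  set c2 := (n : ℝ) * μ / 2
  have hA := hasFDerivAt_quad (Amat n p ξ i) x
  have hB := hasFDerivAt_quad (Bmat n p i) x
  have hc := hasFDerivAt_coord (ι := Fin n × Fin p) (i, 0) x
  have h := (((hA.const_mul (1/2 : ℝ)).sub hc).const_mul c1).add (hB.const_mul c2)
  refine h.congr_fderiv ?_
  symm
  ext w
  simp only [ContinuousLinearMap.add_apply, ContinuousLinearMap.smul_apply,
    ContinuousLinearMap.coe_sub', Pi.sub_apply, ContinuousLinearMap.sum_apply,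
    smul_eq_mul, InnerProductSpace.toDual_apply_apply,
    PiLp.inner_apply, RCLike.inner_apply, starRingEnd_apply, star_trivial]
  have hproj : ∀ (a : Fin n × Fin p) (v : EuclideanSpace ℝ (Fin n × Fin p)),
      (EuclideanSpace.proj a : EuclideanSpace ℝ (Fin n × Fin p) →L[ℝ] ℝ) v = v a := fun _ _ => rfl
  simp only [hproj]
  rw [key_sum (Amat n p ξ i) (Amat_symm n p ξ i) x w,
    key_sum (Bmat n p i) (Bmat_symm n p i) x w]
  have hstep : ∀ a : Fin n × Fin p, gradVec n p L μ ξ i x a * w a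
      = c1 * ((∑ b, Amat n p ξ i a b * x b) * w a)
        - c1 * ((if a = (i, 0) then (1:ℝ) else 0) * w a)
        + ((n : ℝ) * μ) * ((∑ b, Bmat n p i a b * x b) * w a) := fun a => by
    simp only [gradVec, PiLp.toLp_apply]; ring
  rw [Finset.sum_congr rfl (fun a _ => mul_comm (w a) (gradVec n p L μ ξ i x a))]
  rw [Finset.sum_congr rfl (fun a _ => hstep a), Finset.sum_add_distrib,
    Finset.sum_sub_distrib, ← Finset.mul_sum, ← Finset.mul_sum, ← Finset.mul_sum]
  have hite : ∑ a : Fin n × Fin p, (if a = (i, 0) then (1:ℝ) else 0) * w a = w (i, 0) := by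
    simp
  rw [hite]
  simp only [c1, c2]
  ring

lemma mat_bound {ι : Type*} [Fintype ι] (M : Matrix ι ι ℝ) (R : ℝ) (hR : 0 ≤ R)
    (hrow : ∀ j, ∑ k, |M j k| ≤ R) (hcol : ∀ k, ∑ j, |M j k| ≤ R) (w : ι → ℝ) :
    ∑ j, (∑ k, M j k * w k) ^ 2 ≤ R ^ 2 * ∑ k, (w k) ^ 2 := by
  have key : ∀ j, (∑ k, M j k * w k) ^ 2 ≤ R * ∑ k, |M j k| * (w k) ^ 2 := by
    intro j
    have hcs := Finset.sum_mul_sq_le_sq_mul_sq Finset.univ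
      (fun k => Real.sqrt |M j k|)
      (fun k => (M j k / Real.sqrt |M j k|) * w k)
    have h1 : ∀ k, Real.sqrt |M j k| * ((M j k / Real.sqrt |M j k|) * w k) = M j k * w k := by
      intro k
      rcases eq_or_ne (M j k) 0 with h | h
      · simp [h]
      · have : Real.sqrt |M j k| ≠ 0 := by positivity
        field_simp
    have h2 : ∀ k, ((M j k / Real.sqrt |M j k|) * w k) ^ 2 = |M j k| * (w k) ^ 2 := by
      intro k
      rcases eq_or_ne (M j k) 0 with h | h
      · simp [h]
      · have hs : Real.sqrt |M j k| ≠ 0 := by positivity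
        have habs : |M j k| ≠ 0 := abs_ne_zero.mpr h
        have hMM : M j k ^ 2 = |M j k| * |M j k| := by
          rw [pow_two, ← abs_mul_abs_self]
        rw [mul_pow, div_pow, Real.sq_sqrt (abs_nonneg _), hMM]
        field_simp
    have h3 : ∀ k, (Real.sqrt |M j k|) ^ 2 = |M j k| := fun k => Real.sq_sqrt (abs_nonneg _)
    simp only [h1, h2, h3] at hcs
    calc (∑ k, M j k * w k) ^ 2 ≤ (∑ k, |M j k|) * ∑ k, |M j k| * (w k) ^ 2 := hcs
      _ ≤ R * ∑ k, |M j k| * (w k) ^ 2 := by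
          apply mul_le_mul_of_nonneg_right (hrow j)
          positivity
  calc ∑ j, (∑ k, M j k * w k) ^ 2 ≤ ∑ j, R * ∑ k, |M j k| * (w k) ^ 2 :=
        Finset.sum_le_sum fun j _ => key j
    _ = R * ∑ k, (∑ j, |M j k|) * (w k) ^ 2 := by
        rw [← Finset.mul_sum, Finset.sum_comm]
        congr 1
        exact Finset.sum_congr rfl fun k _ => (Finset.sum_mul _ _ _).symm
    _ ≤ R * ∑ k, R * (w k) ^ 2 := by
        apply mul_le_mul_of_nonneg_left _ hR
        exact Finset.sum_le_sum fun k _ =>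
          mul_le_mul_of_nonneg_right (hcol k) (sq_nonneg _)
    _ = R ^ 2 * ∑ k, (w k) ^ 2 := by rw [← Finset.mul_sum]; ring

lemma sum_ite_le_one {p : ℕ} (P : Fin p → Prop) [DecidablePred P]
    (h : ∀ k l, P k → P l → k = l) :
    ∑ k : Fin p, (if P k then (1 : ℝ) else 0) ≤ 1 := by
  rw [Finset.sum_boole]
  have : (Finset.univ.filter P).card ≤ 1 := by
    apply Finset.card_le_one.mpr
    intro a ha b hb
    simp only [Finset.mem_filter] at ha hb
    exact h a b ha.2 hb.2
  exact_mod_cast this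

lemma Tmat_row_sum (p : ℕ) (ξ : ℝ) (hξ0 : 0 ≤ ξ) (hξ3 : ξ ≤ 3) (j : Fin p) :
    ∑ k, |Tmat p ξ j k| ≤ 4 := by
  by_cases hj : (j : ℕ) = p - 1
  · have hbound : ∀ k : Fin p, |Tmat p ξ j k| ≤
        (if k = j then ξ else 0) + (if (k : ℕ) + 1 = (j : ℕ) then (1:ℝ) else 0) := by
      intro k
      by_cases hkj : k = j
      · have : ¬ ((k : ℕ) + 1 = (j : ℕ)) := by omega
        simp [Tmat, hkj, hj, this, abs_of_nonneg hξ0]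
      · have hjk : j ≠ k := fun h => hkj h.symm
        have hnot : ¬ ((j : ℕ) + 1 = (k : ℕ)) := by
          have := k.isLt; omega
        simp only [Tmat, if_neg hjk, hnot, false_or, if_neg hkj]
        split_ifs with h
        · simp
        · simp
    calc ∑ k, |Tmat p ξ j k|
        ≤ ∑ k : Fin p, ((if k = j then ξ else 0)
            + (if (k : ℕ) + 1 = (j : ℕ) then (1:ℝ) else 0)) :=
          Finset.sum_le_sum fun k _ => hbound k
      _ = ξ + ∑ k : Fin p, (if (k : ℕ) + 1 = (j : ℕ) then (1:ℝ) else 0) := by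
          rw [Finset.sum_add_distrib, Finset.sum_ite_eq' Finset.univ j (fun _ => ξ)]
          simp
      _ ≤ ξ + 1 := by
          have := sum_ite_le_one (fun k : Fin p => (k : ℕ) + 1 = (j : ℕ))
            (fun k l hk hl => Fin.ext (by omega))
          linarith
      _ ≤ 4 := by linarith
  · have hbound : ∀ k : Fin p, |Tmat p ξ j k| ≤
        (if k = j then (2:ℝ) else 0) + (if (j : ℕ) + 1 = (k : ℕ) then (1:ℝ) else 0)
          + (if (k : ℕ) + 1 = (j : ℕ) then (1:ℝ) else 0) := by
      intro k
      by_cases hkj : k = j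
      · have h1 : ¬ ((j : ℕ) + 1 = (k : ℕ)) := by omega
        have h2 : ¬ ((k : ℕ) + 1 = (j : ℕ)) := by omega
        simp [Tmat, hkj, hj, h1, h2]
      · have hjk : j ≠ k := fun h => hkj h.symm
        simp only [Tmat, if_neg hjk, if_neg hkj]
        split_ifs with h h1 h2 h3 h4 <;> simp_all
    calc ∑ k, |Tmat p ξ j k|
        ≤ ∑ k : Fin p, ((if k = j then (2:ℝ) else 0)
            + (if (j : ℕ) + 1 = (k : ℕ) then (1:ℝ) else 0)
            + (if (k : ℕ) + 1 = (j : ℕ) then (1:ℝ) else 0)) :=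
          Finset.sum_le_sum fun k _ => hbound k
      _ ≤ 2 + 1 + 1 := by
          rw [Finset.sum_add_distrib, Finset.sum_add_distrib,
            Finset.sum_ite_eq' Finset.univ j (fun _ => (2:ℝ))]
          have ha := sum_ite_le_one (fun k : Fin p => (j : ℕ) + 1 = (k : ℕ))
            (fun k l hk hl => Fin.ext (by omega))
          have hb := sum_ite_le_one (fun k : Fin p => (k : ℕ) + 1 = (j : ℕ))
            (fun k l hk hl => Fin.ext (by omega))
          simp only [Finset.mem_univ, if_pos]
          linarith
      _ = 4 := by norm_num

lemma euclidean_norm_sq {ι : Type*} [Fintype ι] (v : EuclideanSpace ℝ ι) :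
    ‖v‖ ^ 2 = ∑ a, (v a) ^ 2 := by
  rw [EuclideanSpace.norm_eq, Real.sq_sqrt (by positivity)]
  exact Finset.sum_congr rfl fun a _ => by rw [Real.norm_eq_abs, sq_abs]

/-- The family `{f_i}` of the Case (2) hard instance is `L`-average smooth:
`(1/n) ∑ ‖∇f_i(x) − ∇f_i(y)‖² ≤ L² ‖x−y‖²` for all `x, y`. -/
theorem stmt3 (n p : ℕ) (hn : 2 ≤ n) [NeZero p] (hp : 1 ≤ p)
    (L μ κ ξ : ℝ) (hμ : 0 < μ) (hL : 0 < L) (hκ : κ = L / μ) (hκn : Real.sqrt n < κ)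
    (hξ : ξ = (Real.sqrt κ + 3 * (n : ℝ) ^ ((1 : ℝ) / 4)) /
        (Real.sqrt κ + (n : ℝ) ^ ((1 : ℝ) / 4))) :
    ∀ x y : EuclideanSpace ℝ (Fin n × Fin p),
      (1 / (n : ℝ)) *
          ∑ i : Fin n, ‖gradient (fComp2 n p L μ ξ i) x - gradient (fComp2 n p L μ ξ i) y‖ ^ 2
        ≤ L ^ 2 * ‖x - y‖ ^ 2 := by
  intro x y
  set c1 := (Real.sqrt n * L - n * μ) / 4 with hc1def
  -- basic facts about the constants
  have hn0 : (0 : ℝ) < n := by positivity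
  have hsn : (0 : ℝ) ≤ Real.sqrt n := Real.sqrt_nonneg _
  have hsnL : (n : ℝ) * μ ≤ Real.sqrt n * L := by
    have hκpos : Real.sqrt n < L / μ := hκ ▸ hκn
    have : Real.sqrt n * μ < L := by
      rw [← lt_div_iff₀ hμ]; exact hκpos
    have h2 : Real.sqrt n * (Real.sqrt n * μ) ≤ Real.sqrt n * L := by
      apply mul_le_mul_of_nonneg_left (le_of_lt this) hsn
    calc (n : ℝ) * μ = Real.sqrt n * (Real.sqrt n * μ) := by
          rw [← mul_assoc, Real.mul_self_sqrt (by positivity)]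
      _ ≤ Real.sqrt n * L := h2
  have hc1 : 0 ≤ c1 := by rw [hc1def]; linarith
  have hnμ : 0 ≤ (n : ℝ) * μ := by positivity
  -- bounds on ξ
  have hκ0 : 0 < κ := lt_of_le_of_lt (Real.sqrt_nonneg _) hκn
  have ht : 0 < (n : ℝ) ^ ((1 : ℝ) / 4) := by positivity
  have hsκ : 0 < Real.sqrt κ := Real.sqrt_pos.mpr hκ0
  have hξ0 : 0 ≤ ξ := by
    rw [hξ]; positivity
  have hξ3 : ξ ≤ 3 := by
    rw [hξ, div_le_iff₀ (by linarith)]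
    nlinarith
  -- the per-block matrix
  set M : Matrix (Fin p) (Fin p) ℝ :=
    fun j k => c1 * Tmat p ξ j k + (if j = k then (n : ℝ) * μ else 0) with hMdef
  have hMrow : ∀ j, ∑ k, |M j k| ≤ Real.sqrt n * L := by
    intro j
    have : ∀ k, |M j k| ≤ c1 * |Tmat p ξ j k| + (if j = k then (n : ℝ) * μ else 0) := by
      intro k
      calc |M j k| ≤ |c1 * Tmat p ξ j k| + |if j = k then (n : ℝ) * μ else 0| :=
            abs_add_le _ _
        _ = c1 * |Tmat p ξ j k| + (if j = k then (n : ℝ) * μ else 0) := by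
            rw [abs_mul, abs_of_nonneg hc1]
            congr 1
            split_ifs <;> simp [abs_of_nonneg hnμ]
    calc ∑ k, |M j k| ≤ ∑ k, (c1 * |Tmat p ξ j k| + (if j = k then (n : ℝ) * μ else 0)) :=
          Finset.sum_le_sum fun k _ => this k
      _ = c1 * (∑ k, |Tmat p ξ j k|) + (n : ℝ) * μ := by
          rw [Finset.sum_add_distrib, ← Finset.mul_sum,
            Finset.sum_ite_eq Finset.univ j (fun _ => (n : ℝ) * μ)]
          simp
      _ ≤ c1 * 4 + (n : ℝ) * μ := by
          have := Tmat_row_sum p ξ hξ0 hξ3 j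
          nlinarith
      _ = Real.sqrt n * L := by rw [hc1def]; ring
  have hMsymm : ∀ j k, M j k = M k j := by
    intro j k
    simp only [hMdef]
    rw [Tmat_symm]
    congr 1
    split_ifs with h1 h2 h2 <;> simp_all [h1]
  have hMcol : ∀ k, ∑ j, |M j k| ≤ Real.sqrt n * L := by
    intro k
    calc ∑ j, |M j k| = ∑ j, |M k j| := Finset.sum_congr rfl fun j _ => by rw [hMsymm]
      _ ≤ Real.sqrt n * L := hMrow k
  -- identify the gradient difference on each block
  set z : EuclideanSpace ℝ (Fin n × Fin p) := x - y with hzdef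
  have hz : ∀ a, z a = x a - y a := fun a => rfl
  have hgrad : ∀ i : Fin n,
      gradient (fComp2 n p L μ ξ i) x - gradient (fComp2 n p L μ ξ i) y
        = gradVec n p L μ ξ i x - gradVec n p L μ ξ i y := by
    intro i
    rw [(hasGradientAt_fComp2 n p L μ ξ i x).gradient,
      (hasGradientAt_fComp2 n p L μ ξ i y).gradient]
  have hdiff : ∀ (i : Fin n) (a : Fin n × Fin p),
      (gradVec n p L μ ξ i x - gradVec n p L μ ξ i y) a
        = c1 * (∑ b, Amat n p ξ i a b * z b) + (n : ℝ) * μ * ∑ b, Bmat n p i a b * z b := by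
    intro i a
    have : (gradVec n p L μ ξ i x - gradVec n p L μ ξ i y) a
        = gradVec n p L μ ξ i x a - gradVec n p L μ ξ i y a := rfl
    rw [this]
    simp only [gradVec, PiLp.toLp_apply, hz]
    rw [← hc1def]
    have hA : ∑ b, Amat n p ξ i a b * (x b - y b)
        = (∑ b, Amat n p ξ i a b * x b) - ∑ b, Amat n p ξ i a b * y b := by
      rw [← Finset.sum_sub_distrib]
      exact Finset.sum_congr rfl fun b _ => by ring
    have hB : ∑ b, Bmat n p i a b * (x b - y b)
        = (∑ b, Bmat n p i a b * x b) - ∑ b, Bmat n p i a b * y b := by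
      rw [← Finset.sum_sub_distrib]
      exact Finset.sum_congr rfl fun b _ => by ring
    rw [hA, hB]
    ring
  -- block structure
  have hblock0 : ∀ (i : Fin n) (a : Fin n × Fin p), a.1 ≠ i →
      c1 * (∑ b, Amat n p ξ i a b * z b) + (n : ℝ) * μ * ∑ b, Bmat n p i a b * z b = 0 := by
    intro i a ha
    have h1 : ∀ b : Fin n × Fin p, Amat n p ξ i a b = 0 := by
      intro b; simp [Amat, ha]
    have h2 : ∀ b : Fin n × Fin p, Bmat n p i a b = 0 := by
      intro b
      simp only [Bmat, ite_eq_right_iff, and_imp]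
      intro hab hai
      exact absurd hai ha
    simp [h1, h2]
  have hblockM : ∀ (i : Fin n) (j : Fin p),
      c1 * (∑ b, Amat n p ξ i (i, j) b * z b)
          + (n : ℝ) * μ * ∑ b, Bmat n p i (i, j) b * z b
        = ∑ k, M j k * z (i, k) := by
    intro i j
    have hA : ∑ b : Fin n × Fin p, Amat n p ξ i (i, j) b * z b
        = ∑ k, Tmat p ξ j k * z (i, k) := by
      rw [Fintype.sum_prod_type]
      rw [Finset.sum_eq_single i]
      · refine Finset.sum_congr rfl fun k _ => ?_
        simp [Amat]
      · intro b _ hb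
        apply Finset.sum_eq_zero
        intro k _
        simp [Amat, hb]
      · intro h; exact absurd (Finset.mem_univ i) h
    have hB : ∑ b : Fin n × Fin p, Bmat n p i (i, j) b * z b = z (i, j) := by
      rw [Finset.sum_eq_single (i, j)]
      · simp [Bmat]
      · intro b _ hb
        simp only [Bmat, ite_eq_right_iff, and_imp]
        rw [if_neg]
        · ring
        · rintro ⟨h1, -⟩; exact hb h1.symm
      · intro h; exact absurd (Finset.mem_univ _) h
    rw [hA, hB, hMdef]
    simp only [Finset.sum_add_distrib, add_mul, Finset.mul_sum]
    simp only [ite_mul, zero_mul, Finset.sum_ite_eq, Finset.mem_univ, if_true, mul_assoc]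
  -- norms of block differences
  have hnorm : ∀ i : Fin n,
      ‖gradient (fComp2 n p L μ ξ i) x - gradient (fComp2 n p L μ ξ i) y‖ ^ 2
        = ∑ j : Fin p, (∑ k, M j k * z (i, k)) ^ 2 := by
    intro i
    rw [hgrad i, euclidean_norm_sq, Fintype.sum_prod_type, Finset.sum_eq_single i]
    · exact Finset.sum_congr rfl fun j _ => by rw [hdiff i (i, j), hblockM i j]
    · intro b _ hb
      apply Finset.sum_eq_zero
      intro j _
      rw [hdiff i (b, j), hblock0 i (b, j) hb]
      norm_num
    · intro h; exact absurd (Finset.mem_univ i) h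
  have hbound : ∀ i : Fin n, ∑ j : Fin p, (∑ k, M j k * z (i, k)) ^ 2
      ≤ (Real.sqrt n * L) ^ 2 * ∑ k, (z (i, k)) ^ 2 :=
    fun i => mat_bound M _ (by positivity) hMrow hMcol (fun k => z (i, k))
  have hzz : ‖x - y‖ ^ 2 = ∑ i : Fin n, ∑ k : Fin p, (z (i, k)) ^ 2 := by
    rw [← hzdef, euclidean_norm_sq, Fintype.sum_prod_type]
  have hsq : (Real.sqrt n * L) ^ 2 = n * L ^ 2 := by
    rw [mul_pow, Real.sq_sqrt (le_of_lt hn0)]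
  calc (1 / (n : ℝ)) *
        ∑ i : Fin n, ‖gradient (fComp2 n p L μ ξ i) x - gradient (fComp2 n p L μ ξ i) y‖ ^ 2
      ≤ (1 / (n : ℝ)) * ∑ i : Fin n, ((n : ℝ) * L ^ 2) * ∑ k : Fin p, (z (i, k)) ^ 2 := by
        apply mul_le_mul_of_nonneg_left _ (by positivity)
        apply Finset.sum_le_sum
        intro i _
        rw [hnorm i, ← hsq]
        exact hbound i
    _ = L ^ 2 * ‖x - y‖ ^ 2 := by
        rw [hzz, ← Finset.mul_sum]
        field_simp
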